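/- Let (X,d) be a metric space, α ≥ 0, let A_n ⊆ X be a sequence of subsets and A ⊆ X a compact set such that the Hausdorff distance d_H(A_n, A) → 0 as n → ∞. Then H^α_∞(A) ≥ limsup_{n→∞} H^α_∞(A_n). -/

import Mathlib

open MeasureTheory Filter Set Topology
open scoped ENNReal NNReal

/-- `ω_α = π^(α/2) / Γ(α/2 + 1)`, the normalizing constant for the `α`-dimensional
Hausdorff measure (for integer `α` it is the volume of the unit ball of `ℝ^α`). -/
noncomputable def omegaHaus (α : ℝ) : ℝ := Real.pi ^ (α / 2) / Real.Gamma (α / 2 + 1)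

/-- The `α`-dimensional Hausdorff pre-measure
`H^α_∞(A) = inf {Σ_i ω_α (diam E_i / 2)^α : A ⊆ ⋃_i E_i}`, the infimum running over
countable covers of `A` with no diameter restriction. -/
noncomputable def hausdorffPre {X : Type*} [PseudoEMetricSpace X] (α : ℝ) (A : Set X) : ℝ≥0∞ :=
  ⨅ (E : ℕ → Set X) (_ : A ⊆ ⋃ i, E i),
    ∑' i, ENNReal.ofReal (omegaHaus α) * (EMetric.diam (E i) / 2) ^ α

/-- **Upper semicontinuity of the `∞`-Hausdorff premeasure along Hausdorff convergence.**
If `A n ⊆ X` converge to a compact set `K` in the Hausdorff distance, then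
`H^α_∞(K) ≥ limsup_n H^α_∞(A n)`. -/
theorem hausdorffPre_limsup_le {X : Type*} [MetricSpace X] (α : ℝ) (hα : 0 ≤ α)
    (A : ℕ → Set X) (K : Set X) (hK : IsCompact K)
    (hconv : Tendsto (fun n => EMetric.hausdorffEdist (A n) K) atTop (𝓝 0)) :
    Filter.limsup (fun n => hausdorffPre α (A n)) atTop ≤ hausdorffPre α K := by
  set ω : ℝ≥0∞ := ENNReal.ofReal (omegaHaus α) with hωdef
  -- case α = 0 : the premeasure of anything is ⊤
  rcases eq_or_lt_of_le hα with hα0 | hαpos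
  · have hK' : hausdorffPre α K = ⊤ := by
      have hω1 : ENNReal.ofReal (omegaHaus 0) = 1 := by
        simp [omegaHaus, Real.Gamma_one]
      simp only [hausdorffPre, ← hα0, ENNReal.rpow_zero, mul_one, hω1, iInf_eq_top]
      intro E _
      exact ENNReal.tsum_const_eq_top_of_ne_zero one_ne_zero
    rw [hK']; exact le_top
  by_cases htop : hausdorffPre α K = ⊤
  · rw [htop]; exact le_top
  refine ENNReal.le_of_forall_pos_le_add fun ε hε _ => ?_
  have hεhalf : ((ε : ℝ≥0∞) / 2) ≠ 0 := by
    simp [ENNReal.div_eq_top, hε.ne']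
  -- choose a near-optimal cover
  have h1 : hausdorffPre α K < hausdorffPre α K + (ε : ℝ≥0∞) / 2 :=
    ENNReal.lt_add_right htop hεhalf
  have h2 : (⨅ (E : ℕ → Set X) (_ : K ⊆ ⋃ i, E i),
      ∑' i, ω * (EMetric.diam (E i) / 2) ^ α) < hausdorffPre α K + (ε : ℝ≥0∞) / 2 := h1
  rw [iInf_lt_iff] at h2
  obtain ⟨E, h2⟩ := h2
  rw [iInf_lt_iff] at h2
  obtain ⟨hE, hS⟩ := h2
  have hωtop : ω ≠ ⊤ := ENNReal.ofReal_ne_top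
  have hSfin : ∑' i, ω * (EMetric.diam (E i) / 2) ^ α ≠ ⊤ :=
    (hS.trans (ENNReal.add_lt_top.mpr ⟨lt_top_iff_ne_top.mpr htop, by
      simp [ENNReal.div_lt_top, ENNReal.coe_ne_top]⟩)).ne
  -- choose per-index thickening radii
  have hδ : ∀ i : ℕ, ∃ δ : ℝ, 0 < δ ∧
      ω * (EMetric.diam (Metric.thickening δ (E i)) / 2) ^ α ≤
        ω * (EMetric.diam (E i) / 2) ^ α + (ε : ℝ≥0∞) / 2 * 2⁻¹ ^ (i + 1) := by
    intro i
    set d := EMetric.diam (E i) with hd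
    by_cases hω0 : ω = 0
    · exact ⟨1, one_pos, by simp [hω0]⟩
    have hterm : ω * (d / 2) ^ α ≠ ⊤ :=
      ne_top_of_le_ne_top hSfin (ENNReal.le_tsum i)
    have hdtop : d ≠ ⊤ := by
      intro hdt
      apply hterm
      rw [hdt]
      rw [ENNReal.top_div_of_ne_top (by norm_num), ENNReal.top_rpow_of_pos hαpos,
        ENNReal.mul_top hω0]
    have hb : ((ε : ℝ≥0∞) / 2 * 2⁻¹ ^ (i + 1)) ≠ 0 := by
      exact mul_ne_zero hεhalf (pow_ne_zero _ (by norm_num))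
    have hcont : Tendsto (fun c : ℝ≥0∞ => ω * ((d + 2 * c) / 2) ^ α) (𝓝 0)
        (𝓝 (ω * (d / 2) ^ α)) := by
      have hc : Continuous (fun c : ℝ≥0∞ => ω * ((d + 2 * c) / 2) ^ α) := by
        apply ENNReal.continuous_const_mul hωtop |>.comp
        apply ENNReal.continuous_rpow_const.comp
        apply (ENNReal.continuous_div_const 2 (by norm_num)).comp
        exact continuous_const.add (ENNReal.continuous_const_mul (by norm_num))
      simpa using hc.tendsto 0
    have hlt : ω * (d / 2) ^ α < ω * (d / 2) ^ α + (ε : ℝ≥0∞) / 2 * 2⁻¹ ^ (i + 1) :=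
      ENNReal.lt_add_right hterm hb
    have hev := hcont.eventually_lt_const hlt
    -- transfer along δ ↦ (2 * ofReal δ) as δ → 0⁺
    have htend : Tendsto (fun δ : ℝ => ENNReal.ofReal δ) (𝓝[>] 0) (𝓝 0) := by
      have := (ENNReal.continuous_ofReal.tendsto 0)
      simpa using this.mono_left nhdsWithin_le_nhds
    have := (htend.eventually hev).and self_mem_nhdsWithin
    obtain ⟨δ, hδ1, hδ2⟩ := this.exists
    refine ⟨δ, hδ2, ?_⟩
    refine le_trans ?_ hδ1.le
    gcongr
    have h := Metric.ediam_thickening_le (s := E i) δ.toNNReal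
    rw [Real.coe_toNNReal δ hδ2.le] at h
    refine h.trans (le_of_eq ?_)
    show EMetric.diam (E i) + ↑(2 * δ.toNNReal) = d + 2 * ENNReal.ofReal δ
    rw [hd, ENNReal.coe_mul]
    norm_num
    rfl
  choose δ hδpos hδle using hδ
  set U : ℕ → Set X := fun i => Metric.thickening (δ i) (E i) with hU
  have hKU : K ⊆ ⋃ i, U i :=
    hE.trans (iUnion_mono fun i => Metric.self_subset_thickening (hδpos i) _)
  obtain ⟨F, hF⟩ := hK.elim_finite_subcover U
    (fun i => Metric.isOpen_thickening) hKU
  obtain ⟨r, hr, hrsub⟩ := hK.exists_thickening_subset_open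
    (isOpen_biUnion fun i _ => Metric.isOpen_thickening) hF
  have hev : ∀ᶠ n in atTop, A n ⊆ ⋃ i, U i := by
    have h0r : (0 : ℝ≥0∞) < ENNReal.ofReal r := ENNReal.ofReal_pos.mpr hr
    filter_upwards [hconv.eventually_lt_const h0r] with n hn x hx
    have hxK : EMetric.infEdist x K < ENNReal.ofReal r :=
      lt_of_le_of_lt (EMetric.infEdist_le_hausdorffEdist_of_mem hx) hn
    have : x ∈ Metric.thickening r K := Metric.mem_thickening_iff_infEdist_lt.mpr hxK
    exact iUnion_subset (fun i => iUnion_subset fun _ => subset_iUnion U i) (hrsub this)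
  have hgeom : ∑' i : ℕ, (ε : ℝ≥0∞) / 2 * 2⁻¹ ^ (i + 1) = (ε : ℝ≥0∞) / 2 := by
    rw [ENNReal.tsum_mul_left]
    have : ∑' i : ℕ, (2⁻¹ : ℝ≥0∞) ^ (i + 1) = 1 := by
      simp_rw [pow_succ]
      rw [ENNReal.tsum_mul_right, ENNReal.tsum_geometric, ENNReal.one_sub_inv_two, inv_inv]
      exact ENNReal.mul_inv_cancel (by norm_num) (by norm_num)
    rw [this, mul_one]
  have hbnd : ∀ᶠ n in atTop, hausdorffPre α (A n) ≤ hausdorffPre α K + ε := by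
    filter_upwards [hev] with n hn
    calc hausdorffPre α (A n)
        ≤ ∑' i, ω * (EMetric.diam (U i) / 2) ^ α := iInf₂_le U hn
      _ ≤ ∑' i, (ω * (EMetric.diam (E i) / 2) ^ α + (ε : ℝ≥0∞) / 2 * 2⁻¹ ^ (i + 1)) :=
          ENNReal.tsum_le_tsum hδle
      _ = (∑' i, ω * (EMetric.diam (E i) / 2) ^ α) + ∑' i, (ε : ℝ≥0∞) / 2 * 2⁻¹ ^ (i + 1) :=
          ENNReal.tsum_add
      _ ≤ (hausdorffPre α K + (ε : ℝ≥0∞) / 2) + (ε : ℝ≥0∞) / 2 := by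
          rw [hgeom]; exact add_le_add_left hS.le _
      _ = hausdorffPre α K + ε := by rw [add_assoc, ENNReal.add_halves]
  exact limsup_le_of_le (by isBoundedDefault) hbnd
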